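/- For t > 0, the function F(u) := [1 - 2u e^{-u} - e^{-2u} + e^{-t}(2u - 3 + 4e^{-u} - e^{-2u})] / [(1 - e^{-t})(1 - e^{-u})^2] satisfies lim_{u→0+} F(u) = 0 and lim_{u→t-} F(u) = 1, so it is a valid cumulative distribution function on (0, t). -/

import Mathlib

open Real Filter

/-- The distribution function of the coalescence time of a sampled pair in a rate-1
Yule process conditioned on `{Y_t ≥ 2}`. -/
noncomputable def coalCDF (t u : ℝ) : ℝ :=
  (1 - 2 * u * Real.exp (-u) - Real.exp (-2 * u) +
      Real.exp (-t) * (2 * u - 3 + 4 * Real.exp (-u) - Real.exp (-2 * u))) /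
    ((1 - Real.exp (-t)) * (1 - Real.exp (-u)) ^ 2)

section aux

noncomputable def coalN (t u : ℝ) : ℝ :=
  1 - 2 * u * Real.exp (-u) - Real.exp (-2 * u) +
      Real.exp (-t) * (2 * u - 3 + 4 * Real.exp (-u) - Real.exp (-2 * u))

noncomputable def coalD (t u : ℝ) : ℝ :=
  (1 - Real.exp (-t)) * (1 - Real.exp (-u)) ^ 2

noncomputable def coalN' (t u : ℝ) : ℝ :=
  -2 * Real.exp (-u) + 2 * u * Real.exp (-u) + 2 * Real.exp (-2 * u) +
      Real.exp (-t) * (2 - 4 * Real.exp (-u) + 2 * Real.exp (-2 * u))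

noncomputable def coalD' (t u : ℝ) : ℝ :=
  (1 - Real.exp (-t)) * (2 * Real.exp (-u) - 2 * Real.exp (-2 * u))

noncomputable def coalN'' (t u : ℝ) : ℝ :=
  4 * Real.exp (-u) - 2 * u * Real.exp (-u) - 4 * Real.exp (-2 * u) +
      Real.exp (-t) * (4 * Real.exp (-u) - 4 * Real.exp (-2 * u))

noncomputable def coalD'' (t u : ℝ) : ℝ :=
  (1 - Real.exp (-t)) * (-2 * Real.exp (-u) + 4 * Real.exp (-2 * u))

lemma hasDerivAt_exp_neg (u : ℝ) :
    HasDerivAt (fun u : ℝ => Real.exp (-u)) (-Real.exp (-u)) u := by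
  simpa using ((hasDerivAt_id u).neg).exp

lemma hasDerivAt_exp_neg2 (u : ℝ) :
    HasDerivAt (fun u : ℝ => Real.exp (-2 * u)) (-2 * Real.exp (-2 * u)) u := by
  simpa [mul_comm] using (((hasDerivAt_id u).const_mul (-2 : ℝ))).exp

lemma hasDerivAt_coalN (t u : ℝ) : HasDerivAt (coalN t) (coalN' t u) u := by
  have h1 := hasDerivAt_exp_neg u
  have h2 := hasDerivAt_exp_neg2 u
  have H := (((hasDerivAt_const u (1:ℝ)).sub
      (((hasDerivAt_id u).const_mul (2:ℝ)).mul h1)).sub h2).add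
      (HasDerivAt.const_mul (Real.exp (-t)) (((((hasDerivAt_id u).const_mul (2:ℝ)).sub
        (hasDerivAt_const u (3:ℝ))).add (h1.const_mul (4:ℝ))).sub h2))
  refine H.congr_deriv (Eq.symm ?_)
  simp only [coalN', id]; ring

lemma hasDerivAt_coalN' (t u : ℝ) : HasDerivAt (coalN' t) (coalN'' t u) u := by
  have h1 := hasDerivAt_exp_neg u
  have h2 := hasDerivAt_exp_neg2 u
  have H := (((h1.const_mul (-2:ℝ)).add
      (((hasDerivAt_id u).const_mul (2:ℝ)).mul h1)).add (h2.const_mul (2:ℝ))).add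
      (HasDerivAt.const_mul (Real.exp (-t)) (((hasDerivAt_const u (2:ℝ)).sub
        (h1.const_mul (4:ℝ))).add (h2.const_mul (2:ℝ))))
  refine H.congr_deriv (Eq.symm ?_)
  simp only [coalN'', id]; ring

lemma hasDerivAt_coalD (t u : ℝ) : HasDerivAt (coalD t) (coalD' t u) u := by
  have h1 := hasDerivAt_exp_neg u
  have H := (((hasDerivAt_const u (1:ℝ)).sub h1).pow 2).const_mul (1 - Real.exp (-t))
  have hww : Real.exp (-u) * Real.exp (-u) = Real.exp (-2 * u) := by
    rw [← Real.exp_add]; ring_nf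
  refine H.congr_deriv (Eq.symm ?_)
  simp only [coalD', Pi.sub_apply]; push_cast; linear_combination (2 - 2 * Real.exp (-t)) * hww

lemma hasDerivAt_coalD' (t u : ℝ) : HasDerivAt (coalD' t) (coalD'' t u) u := by
  have h1 := hasDerivAt_exp_neg u
  have h2 := hasDerivAt_exp_neg2 u
  have H := ((h1.const_mul (2:ℝ)).sub (h2.const_mul (2:ℝ))).const_mul (1 - Real.exp (-t))
  refine H.congr_deriv (Eq.symm ?_)
  simp only [coalD'']; ring

end aux

/-- For `t > 0`, the function
`F(u) = [1 - 2u e^{-u} - e^{-2u} + e^{-t}(2u - 3 + 4e^{-u} - e^{-2u})]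
        / [(1 - e^{-t})(1 - e^{-u})²]`
satisfies `lim_{u→0+} F(u) = 0` and `lim_{u→t-} F(u) = 1`, so it is a valid
cumulative distribution function on `(0, t)`. -/
theorem coalCDF_boundary_limits (t : ℝ) (ht : 0 < t) :
    Tendsto (coalCDF t) (nhdsWithin 0 (Set.Ioi 0)) (nhds 0) ∧
    Tendsto (coalCDF t) (nhdsWithin t (Set.Iio t)) (nhds 1) := by
  have hexp : Real.exp (-t) < 1 := by
    rw [Real.exp_lt_one_iff]; linarith
  have hc : (0:ℝ) < 1 - Real.exp (-t) := by linarith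
  have hCDF : coalCDF t = fun u => coalN t u / coalD t u := rfl
  constructor
  · -- limit at 0 from the right
    rw [hCDF]
    have hb : (0:ℝ) < Real.log 2 := Real.log_pos (by norm_num)
    -- inner l'Hôpital step: N'/D' → 0
    have hcontN' : Continuous (coalN' t) := by
      unfold coalN'; continuity
    have hcontN'' : Continuous (coalN'' t) := by
      unfold coalN''; continuity
    have hcontD'' : Continuous (coalD'' t) := by
      unfold coalD''; continuity
    have hcontN : Continuous (coalN t) := by
      unfold coalN; continuity
    have hcontD : Continuous (coalD t) := by
      unfold coalD; continuity
    have hstep2 : Tendsto (fun u => coalN'' t u / coalD'' t u)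
        (nhdsWithin 0 (Set.Ioi 0)) (nhds 0) := by
      have hD''0 : coalD'' t 0 ≠ 0 := by
        simp only [coalD'']
        norm_num
        nlinarith [hexp]
      have := (hcontN''.continuousAt (x := 0)).div (hcontD''.continuousAt (x := 0)) hD''0
      have h0 : coalN'' t 0 / coalD'' t 0 = 0 := by
        simp [coalN'']
      have := this.tendsto
      simp only [Pi.div_apply] at this
      rw [h0] at this
      exact this.mono_left nhdsWithin_le_nhds
    have hstep1 : Tendsto (fun u => coalN' t u / coalD' t u)
        (nhdsWithin 0 (Set.Ioi 0)) (nhds 0) := by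
      apply HasDerivAt.lhopital_zero_right_on_Ioo hb
        (fun x _ => hasDerivAt_coalN' t x) (fun x _ => hasDerivAt_coalD' t x)
      · intro x hx
        have h1 : Real.exp (-(2:ℝ) * x) = Real.exp (-x) * Real.exp (-x) := by
          rw [← Real.exp_add]; ring_nf
        have h2 : Real.exp x < 2 := by
          have := Real.exp_lt_exp.mpr hx.2
          simpa [Real.exp_log (by norm_num : (0:ℝ) < 2)] using this
        have h3 : Real.exp (-x) < 1 := by
          rw [Real.exp_lt_one_iff]; linarith [hx.1]
        have h5 : Real.exp (-x) * Real.exp x = 1 := by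
          rw [← Real.exp_add]; simp
        have : -2 * Real.exp (-x) + 4 * Real.exp (-2 * x) > 0 := by
          rw [show (-2:ℝ) * x = -x + -x by ring, Real.exp_add]
          nlinarith [Real.exp_pos (-x), Real.exp_pos x]
        unfold coalD''
        positivity
      · have h0 : coalN' t 0 = 0 := by simp [coalN']; ring
        have := (hcontN'.continuousAt (x := 0)).tendsto
        rw [h0] at this
        exact this.mono_left nhdsWithin_le_nhds
      · have h0 : coalD' t 0 = 0 := by simp [coalD']
        have hcontD' : Continuous (coalD' t) := by unfold coalD'; continuity
        have := (hcontD'.continuousAt (x := 0)).tendsto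
        rw [h0] at this
        exact this.mono_left nhdsWithin_le_nhds
      · exact hstep2
    apply HasDerivAt.lhopital_zero_right_on_Ioo hb
      (fun x _ => hasDerivAt_coalN t x) (fun x _ => hasDerivAt_coalD t x)
    · intro x hx
      have h1 : Real.exp (-(2:ℝ) * x) = Real.exp (-x) * Real.exp (-x) := by
        rw [← Real.exp_add]; ring_nf
      have h3 : Real.exp (-x) < 1 := by
        rw [Real.exp_lt_one_iff]; linarith [hx.1]
      have : 2 * Real.exp (-x) - 2 * Real.exp (-2 * x) > 0 := by
        rw [h1]; nlinarith [Real.exp_pos (-x)]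
      unfold coalD'
      positivity
    · have h0 : coalN t 0 = 0 := by simp [coalN]; ring
      have := (hcontN.continuousAt (x := 0)).tendsto
      rw [h0] at this
      exact this.mono_left nhdsWithin_le_nhds
    · have h0 : coalD t 0 = 0 := by simp [coalD]
      have := (hcontD.continuousAt (x := 0)).tendsto
      rw [h0] at this
      exact this.mono_left nhdsWithin_le_nhds
    · exact hstep1
  · -- limit at t from the left
    have hcont : ContinuousAt (coalCDF t) t := by
      unfold coalCDF
      apply ContinuousAt.div
      · fun_prop
      · fun_prop
      · have h3 : Real.exp (-t) < 1 := hexp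
        positivity
    have hval : coalCDF t t = 1 := by
      unfold coalCDF
      have h1 : Real.exp (-(2:ℝ) * t) = Real.exp (-t) * Real.exp (-t) := by
        rw [← Real.exp_add]; ring_nf
      rw [h1]
      have hne : (1 - Real.exp (-t)) ≠ 0 := by positivity
      field_simp
      ring
    have := hcont.tendsto
    rw [hval] at this
    exact this.mono_left nhdsWithin_le_nhds
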